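/- Let 𝓘𝓟 be an IPTA, 𝓘𝓜 its probabilistic zone graph, 𝓘𝓟′ = Reconstruct(𝓘𝓜) the IPTA reconstructed from 𝓘𝓜, and 𝓘𝓜′ the probabilistic zone graph of 𝓘𝓟′. Then 𝓘𝓜′ is equivalent to 𝓘𝓜 up to renaming of locations. -/

import Mathlib

open scoped Classical

noncomputable section

/-! ### Basic relations -/

/-- Comparison relations `<, ≤, ≥, >` used in guards and zones. -/
inductive TRel : Type
  | lt | le | ge | gt
deriving DecidableEq

/-- Semantics of a comparison relation on reals. -/
def TRel.holds : TRel → ℝ → ℝ → Prop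
  | .lt, a, b => a < b
  | .le, a, b => a ≤ b
  | .ge, a, b => a ≥ b
  | .gt, a, b => a > b

/-! ### Distributions and interval distributions -/

/-- A finitely supported probability distribution over `S`. -/
structure FDist (S : Type*) where
  prob : S → ℝ
  nonneg : ∀ s, 0 ≤ prob s
  finsupp : (Function.support prob).Finite
  total : ∑ᶠ s, prob s = 1

/-- An interval distribution over `S`: each element gets a closed subinterval of `[0,1]`. -/
structure IntervalDist (S : Type*) where
  lo : S → ℝ
  hi : S → ℝ
  lo_nonneg : ∀ s, 0 ≤ lo s
  lo_le_hi : ∀ s, lo s ≤ hi s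
  hi_le_one : ∀ s, hi s ≤ 1

/-- A distribution implements an interval distribution iff each probability lies in
the corresponding interval. -/
def FDist.Matches {S : Type*} (μ : FDist S) (Υ : IntervalDist S) : Prop :=
  ∀ s, Υ.lo s ≤ μ.prob s ∧ μ.prob s ≤ Υ.hi s

/-- Feasible supports of an interval distribution. -/
def FS {S : Type*} (Υ : IntervalDist S) : Set (Set S) :=
  { T | ∃ μ : FDist S, μ.Matches Υ ∧ ∀ s, 0 < μ.prob s ↔ s ∈ T }

/-- Restriction of an interval distribution to a support: probabilities outside
the support are set to `[0,0]`. -/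
def IntervalDist.restrict {S : Type*} (Υ : IntervalDist S) (T : Set S) : IntervalDist S where
  lo := fun s => if s ∈ T then Υ.lo s else 0
  hi := fun s => if s ∈ T then Υ.hi s else 0
  lo_nonneg := by
    intro s; (try dsimp only); split
    · exact Υ.lo_nonneg s
    · exact le_rfl
  lo_le_hi := by
    intro s; (try dsimp only); split
    · exact Υ.lo_le_hi s
    · exact le_rfl
  hi_le_one := by
    intro s; (try dsimp only); split
    · exact Υ.hi_le_one s
    · exact zero_le_one

/-! ### IMDPs and MDPs -/

/-- An interval Markov decision process. -/
structure IMDP (S A : Type*) where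
  init : S
  trans : Set (S × A × IntervalDist S)

/-- A Markov decision process (with exact, finitely supported distributions). -/
structure MDP (S A : Type*) where
  init : S
  trans : Set (S × A × FDist S)

/-- Lifting (coupling) of a relation `R` to a distribution and an interval distribution. -/
def distLift {S' S : Type*} (R : Set (S' × S)) (ι : FDist S') (I : IntervalDist S) : Prop :=
  ∃ δ : FDist (S' × S),
    (∀ s', 0 < ι.prob s' → ∑ᶠ s, δ.prob (s', s) = 1) ∧
    (∀ s, I.lo s ≤ (∑ᶠ s', ι.prob s' * δ.prob (s', s)) ∧
      (∑ᶠ s', ι.prob s' * δ.prob (s', s)) ≤ I.hi s) ∧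
    (∀ s' s, 0 < δ.prob (s', s) → (s', s) ∈ R)

/-- An MDP implements an IMDP. -/
def MDP.Implements {S' S A : Type*} (M : MDP S' A) (IM : IMDP S A) : Prop :=
  ∃ R : Set (S' × S), (M.init, IM.init) ∈ R ∧
    ∀ s' s, (s', s) ∈ R →
      (∀ a ι, (s', a, ι) ∈ M.trans → ∃ I, (s, a, I) ∈ IM.trans ∧ distLift R ι I) ∧
      (∀ a I, (s, a, I) ∈ IM.trans → ∃ ι, (s', a, ι) ∈ M.trans ∧ distLift R ι I)

/-- An IMDP is consistent iff it admits at least one implementing MDP. -/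
def IMDP.Consistent {S A : Type*} (IM : IMDP S A) : Prop :=
  ∃ (S' : Type) (M : MDP S' A), M.Implements IM

/-- Reachable states of an MDP. -/
inductive MDP.Reach {S A : Type*} (M : MDP S A) : S → Prop
  | init : MDP.Reach M M.init
  | step {s a ι s'} : MDP.Reach M s → (s, a, ι) ∈ M.trans → 0 < ι.prob s' → MDP.Reach M s'

/-- Reachable states of an IMDP (an edge is possible if its upper probability is positive). -/
inductive IMDP.Reach {S A : Type*} (M : IMDP S A) : S → Prop
  | init : IMDP.Reach M M.init
  | step {s a I s'} : IMDP.Reach M s → (s, a, I) ∈ M.trans → 0 < I.hi s' → IMDP.Reach M s'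

/-- An MDP has the same structure as an IMDP: up to renaming (injectively on its
reachable part) and removal of unreachable states, its underlying directed graph is a
subgraph of the one of the IMDP. -/
def MDP.SameStructure {S' S A : Type*} (M : MDP S' A) (IM : IMDP S A) : Prop :=
  ∃ φ : S' → S, Set.InjOn φ { s | M.Reach s } ∧ φ M.init = IM.init ∧
    ∀ s₁ s₂ : S', M.Reach s₁ →
      (∃ a ι, (s₁, a, ι) ∈ M.trans ∧ 0 < ι.prob s₂) →
      ∃ a I, (φ s₁, a, I) ∈ IM.trans ∧ 0 < I.hi (φ s₂)

/-! ### Guards -/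

/-- An atomic (parametric) guard constraint `x ⋈ k` or `x ⋈ p`. -/
inductive GuardAtom (X P : Type*) : Type _
  | const (x : X) (r : TRel) (k : ℤ)
  | param (x : X) (r : TRel) (p : P)

/-- A guard is a (finite) conjunction of atomic constraints. -/
abbrev PGuard (X P : Type*) := List (GuardAtom X P)

/-- A valuated guard atom `x ⋈ q` with a rational constant. -/
inductive VGuardAtom (X : Type*) : Type _
  | atom (x : X) (r : TRel) (q : ℚ)

/-- A valuated guard. -/
abbrev VGuard (X : Type*) := List (VGuardAtom X)

/-- Valuating a guard atom with a (nonnegative rational) parameter valuation. -/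
def GuardAtom.val {X P : Type*} (v : P → NNRat) : GuardAtom X P → VGuardAtom X
  | .const x r k => .atom x r (k : ℚ)
  | .param x r p => .atom x r ((v p : ℚ))

/-- Satisfaction of a valuated guard atom by a clock valuation. -/
def VGuardAtom.sat {X : Type*} (w : X → ℝ) : VGuardAtom X → Prop
  | .atom x r q => r.holds (w x) (q : ℝ)

/-- Satisfaction of a valuated guard by a clock valuation. -/
def VGuard.sat {X : Type*} (w : X → ℝ) (g : VGuard X) : Prop :=
  ∀ c ∈ g, c.sat w

/-- A valuated guard is satisfiable iff some (nonnegative) clock valuation satisfies it. -/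
def VGuard.Satisfiable {X : Type*} (g : VGuard X) : Prop :=
  ∃ w : X → ℝ, (∀ x, 0 ≤ w x) ∧ VGuard.sat w g

/-! ### Zones (non-parametric syntactic guards) -/

/-- An atomic zone constraint: `x ⋈ k` or `x - y ⋈ k` with an integer `k`. -/
inductive ZoneAtom (X : Type*) : Type _
  | rect (x : X) (r : TRel) (k : ℤ)
  | diag (x y : X) (r : TRel) (k : ℤ)

/-- A zone: a conjunction of atomic zone constraints. -/
abbrev Zone (X : Type*) := List (ZoneAtom X)

/-- Satisfaction of an atomic zone constraint. -/
def ZoneAtom.sat {X : Type*} (w : X → ℝ) : ZoneAtom X → Prop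
  | .rect x r k => r.holds (w x) (k : ℝ)
  | .diag x y r k => r.holds (w x - w y) (k : ℝ)

/-- Satisfaction of a zone. -/
def Zone.sat {X : Type*} (w : X → ℝ) (g : Zone X) : Prop := ∀ c ∈ g, c.sat w

/-! ### (Interval) probabilistic timed automata, generic in the guard type `G` -/

/-- An interval probabilistic timed automaton with actions `A`, locations `L`, clocks `X`
and guards of type `G`. -/
structure IPTA (A L X G : Type*) where
  init : L
  edges : Set (L × G × A × IntervalDist (Finset X × L))

/-- A probabilistic timed automaton. -/
structure PTA (A L X G : Type*) where
  init : L
  edges : Set (L × G × A × FDist (Finset X × L))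

/-- The coupling-based lifting of a relation on locations to (interval) distributions
over (reset set, location) pairs. -/
def edistLift {L' L X : Type*} (R : Set (L' × L)) (υ : FDist (Finset X × L'))
    (Υ : IntervalDist (Finset X × L)) : Prop :=
  ∃ δ : FDist (L' × L),
    (∀ (ρ : Finset X) (m' : L'), 0 < υ.prob (ρ, m') → ∑ᶠ m : L, δ.prob (m', m) = 1) ∧
    (∀ (ρ : Finset X) (m : L),
      Υ.lo (ρ, m) ≤ (∑ᶠ m' : L', υ.prob (ρ, m') * δ.prob (m', m)) ∧
      (∑ᶠ m' : L', υ.prob (ρ, m') * δ.prob (m', m)) ≤ Υ.hi (ρ, m)) ∧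
    (∀ m' m, 0 < δ.prob (m', m) → (m', m) ∈ R)

/-- A PTA implements an IPTA (same actions, same clocks, same guards). -/
def PTA.Implements {A L' L X G : Type*} (T : PTA A L' X G) (IP : IPTA A L X G) : Prop :=
  ∃ R : Set (L' × L), (T.init, IP.init) ∈ R ∧
    ∀ l' l, (l', l) ∈ R →
      (∀ g a υ, (l', g, a, υ) ∈ T.edges → ∃ Υ, (l, g, a, Υ) ∈ IP.edges ∧ edistLift R υ Υ) ∧
      (∀ g a Υ, (l, g, a, Υ) ∈ IP.edges → ∃ υ, (l', g, a, υ) ∈ T.edges ∧ edistLift R υ Υ)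

/-- An IPTA is consistent iff it admits at least one implementing PTA. -/
def IPTA.Consistent {A L X G : Type*} (IP : IPTA A L X G) : Prop :=
  ∃ (L' : Type) (T : PTA A L' X G), T.Implements IP

/-! ### Parametric interval probabilistic timed automata -/

/-- A parametric interval probabilistic timed automaton. -/
structure PIPTA (A L X P : Type*) where
  init : L
  edges : Set (L × PGuard X P × A × IntervalDist (Finset X × L))

/-- The type of edges of a PIPTA. -/
abbrev EdgeT (A L X P : Type*) := L × PGuard X P × A × IntervalDist (Finset X × L)

/-- Valuation of a PIPTA: parameters are replaced by their (nonnegative rational) values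
and edges with unsatisfiable guards are removed. -/
def PIPTA.val {A L X P : Type*} (M : PIPTA A L X P) (v : P → NNRat) :
    IPTA A L X (VGuard X) where
  init := M.init
  edges := { e | ∃ l g a Υ, (l, g, a, Υ) ∈ M.edges ∧
      e = (l, g.map (GuardAtom.val v), a, Υ) ∧
      VGuard.Satisfiable (g.map (GuardAtom.val v)) }

/-- An atomic guard constraint respects a lower/upper partition of the parameters. -/
def GuardAtom.LURespects {X P : Type*} (isLower : P → Prop) : GuardAtom X P → Prop
  | .const _ _ _ => True
  | .param _ r p => (isLower p → r = .ge ∨ r = .gt) ∧ (¬ isLower p → r = .le ∨ r = .lt)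

/-- A PIPTA is L/U w.r.t. a partition of its parameters into lower-bound and
upper-bound parameters. -/
def PIPTA.IsLU {A L X P : Type*} (M : PIPTA A L X P) (isLower : P → Prop) : Prop :=
  ∀ e ∈ M.edges, ∀ c ∈ e.2.1, GuardAtom.LURespects isLower c

/-! ### Parametric (non-probabilistic) timed automata -/

/-- A parametric timed automaton (without invariants): transitions carry a guard,
an action, a set of clocks to reset, and a target location. -/
structure PPTA (A L X P : Type*) where
  init : L
  trans : Set (L × PGuard X P × A × Finset X × L)

/-- Reachability in the concrete semantics of a valuated parametric timed automaton. -/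
inductive PPTA.Reach {A L X P : Type*} [DecidableEq X] (T : PPTA A L X P) (v : P → NNRat) :
    L → (X → ℝ) → Prop
  | init : PPTA.Reach T v T.init (fun _ => 0)
  | step {l : L} {w : X → ℝ} {d : ℝ} {g : PGuard X P} {a : A} {ρ : Finset X} {l' : L} :
      PPTA.Reach T v l w →
      (l, g, a, ρ, l') ∈ T.trans →
      0 ≤ d →
      VGuard.sat (fun x => w x + d) (g.map (GuardAtom.val v)) →
      PPTA.Reach T v l' (fun x => if x ∈ ρ then 0 else w x + d)

/-- Runs of a valuated parametric timed automaton, represented by their sequence of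
delays and transitions, starting from a given configuration. -/
def PPTA.IsRunFrom {A L X P : Type*} [DecidableEq X] (T : PPTA A L X P) (v : P → NNRat) :
    L → (X → ℝ) → List (ℝ × (L × PGuard X P × A × Finset X × L)) → Prop
  | _, _, [] => True
  | l, w, (d, tr) :: rest =>
      0 ≤ d ∧ tr ∈ T.trans ∧ tr.1 = l ∧
      VGuard.sat (fun x => w x + d) (tr.2.1.map (GuardAtom.val v)) ∧
      PPTA.IsRunFrom T v tr.2.2.2.2 (fun x => if x ∈ tr.2.2.2.1 then 0 else w x + d) rest

/-- A run of a valuated parametric timed automaton (from the initial configuration). -/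
def PPTA.IsRun {A L X P : Type*} [DecidableEq X] (T : PPTA A L X P) (v : P → NNRat)
    (r : List (ℝ × (L × PGuard X P × A × Finset X × L))) : Prop :=
  T.IsRunFrom v T.init (fun _ => 0) r

/-- A PPTA is L/U w.r.t. a partition of its parameters. -/
def PPTA.IsLU {A L X P : Type*} (T : PPTA A L X P) (isLower : P → Prop) : Prop :=
  ∀ t ∈ T.trans, ∀ c ∈ t.2.1, GuardAtom.LURespects isLower c

/-! ### Concrete runs of PIPTAs -/

/-- Concrete runs of a valuated PIPTA along a list of (edge, reset set, target location)
choices: from configuration `(l, w)` to configuration `(lf, wf)`. Each step delays by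
some `d ≥ 0`, satisfies the (valuated) guard and takes a branch of positive possible
probability. -/
def PIPTA.ConcSteps {A L X P : Type*} [DecidableEq X] (M : PIPTA A L X P) (v : P → NNRat) :
    L → (X → ℝ) → List (EdgeT A L X P × Finset X × L) → L → (X → ℝ) → Prop
  | l, w, [], lf, wf => lf = l ∧ wf = w
  | l, w, (e, ρ, l') :: rest, lf, wf =>
      e ∈ M.edges ∧ e.1 = l ∧ 0 < e.2.2.2.hi (ρ, l') ∧
      ∃ d : ℝ, 0 ≤ d ∧ VGuard.sat (fun x => w x + d) (e.2.1.map (GuardAtom.val v)) ∧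
        PIPTA.ConcSteps M v l' (fun x => if x ∈ ρ then 0 else w x + d) rest lf wf

/-- A location is reachable in the concrete semantics of a valuated PIPTA. -/
def PIPTA.ReachLoc {A L X P : Type*} [DecidableEq X] (M : PIPTA A L X P) (v : P → NNRat)
    (l : L) : Prop :=
  ∃ tr w, M.ConcSteps v M.init (fun _ => 0) tr l w

/-! ### Zone graphs (semantic zones) -/

/-- Time elapsing of a (semantic) zone. -/
def elapse {X : Type*} (C : Set (X → ℝ)) : Set (X → ℝ) :=
  { w' | ∃ w ∈ C, ∃ d : ℝ, 0 ≤ d ∧ w' = fun x => w x + d }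

/-- Reset of a (semantic) zone. -/
def resetClocks {X : Type*} [DecidableEq X] (C : Set (X → ℝ)) (ρ : Finset X) :
    Set (X → ℝ) :=
  { w' | ∃ w ∈ C, w' = fun x => if x ∈ ρ then 0 else w x }

/-- Successor zone: intersect with the guard, reset, then let time elapse. -/
def zoneSucc {X : Type*} [DecidableEq X] (C : Set (X → ℝ)) (g : Zone X) (ρ : Finset X) :
    Set (X → ℝ) :=
  elapse (resetClocks (C ∩ { w | Zone.sat w g }) ρ)

/-- The probabilistic zone graph of an IPTA, as an IMDP whose states are pairs of a
location and a (semantic) zone, and whose actions are the edges of the IPTA. -/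
def IPTA.zoneGraph {A L X : Type*} [DecidableEq X] (IP : IPTA A L X (Zone X)) :
    IMDP (L × Set (X → ℝ)) (L × Zone X × A × IntervalDist (Finset X × L)) where
  init := (IP.init, elapse { w | ∀ x, w x = 0 })
  trans := { t | ∃ l C g a Υ, (l, g, a, Υ) ∈ IP.edges ∧ t.1 = (l, C) ∧
      t.2.1 = (l, g, a, Υ) ∧
      (∀ (ρ : Finset X) (l' : L), 0 < Υ.hi (ρ, l') →
        t.2.2.lo (l', zoneSucc C g ρ) = Υ.lo (ρ, l') ∧
        t.2.2.hi (l', zoneSucc C g ρ) = Υ.hi (ρ, l')) ∧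
      (∀ s' : L × Set (X → ℝ),
        (∀ (ρ : Finset X) (l' : L), 0 < Υ.hi (ρ, l') → s' ≠ (l', zoneSucc C g ρ)) →
        t.2.2.lo s' = 0 ∧ t.2.2.hi s' = 0) }

/-! ### Parametric zone graphs -/

/-- A (semantic) parametric zone: a set of pairs of a clock valuation and a parameter
valuation. -/
abbrev PZone (X P : Type*) := Set ((X → ℝ) × (P → ℝ))

/-- Time elapsing of a parametric zone (only clocks are delayed). -/
def pElapse {X P : Type*} (C : PZone X P) : PZone X P :=
  { wu | ∃ w u, (w, u) ∈ C ∧ ∃ d : ℝ, 0 ≤ d ∧ wu = (fun x => w x + d, u) }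

/-- Reset of a parametric zone. -/
def pReset {X P : Type*} [DecidableEq X] (C : PZone X P) (ρ : Finset X) : PZone X P :=
  { wu | ∃ w u, (w, u) ∈ C ∧ wu = (fun x => if x ∈ ρ then 0 else w x, u) }

/-- Satisfaction of a parametric guard atom by a clock and a parameter valuation. -/
def GuardAtom.psat {X P : Type*} (w : X → ℝ) (u : P → ℝ) : GuardAtom X P → Prop
  | .const x r k => r.holds (w x) (k : ℝ)
  | .param x r p => r.holds (w x) (u p)

/-- Satisfaction of a parametric guard. -/
def PGuard.psat {X P : Type*} (w : X → ℝ) (u : P → ℝ) (g : PGuard X P) : Prop :=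
  ∀ c ∈ g, c.psat w u

/-- The parametric zone associated with a guard. -/
def pGuardSet {X P : Type*} (g : PGuard X P) : PZone X P :=
  { wu | PGuard.psat wu.1 wu.2 g }

/-- Successor parametric zone. -/
def pZoneSucc {X P : Type*} [DecidableEq X] (C : PZone X P) (g : PGuard X P)
    (ρ : Finset X) : PZone X P :=
  pElapse (pReset (C ∩ pGuardSet g) ρ)

/-- The initial parametric zone: all clocks are `0`, parameters are nonnegative, and
time may elapse. -/
def pInitZone (X P : Type*) : PZone X P :=
  pElapse { wu | (∀ x, wu.1 x = 0) ∧ ∀ p, 0 ≤ wu.2 p }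

/-- The parametric probabilistic zone graph of a PIPTA, as an IMDP. -/
def PIPTA.pZoneGraph {A L X P : Type*} [DecidableEq X] (M : PIPTA A L X P) :
    IMDP (L × PZone X P) (EdgeT A L X P) where
  init := (M.init, pInitZone X P)
  trans := { t | ∃ l C g a Υ, (l, g, a, Υ) ∈ M.edges ∧ t.1 = (l, C) ∧
      t.2.1 = (l, g, a, Υ) ∧
      (∀ (ρ : Finset X) (l' : L), 0 < Υ.hi (ρ, l') →
        t.2.2.lo (l', pZoneSucc C g ρ) = Υ.lo (ρ, l') ∧
        t.2.2.hi (l', pZoneSucc C g ρ) = Υ.hi (ρ, l')) ∧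
      (∀ s' : L × PZone X P,
        (∀ (ρ : Finset X) (l' : L), 0 < Υ.hi (ρ, l') → s' ≠ (l', pZoneSucc C g ρ)) →
        t.2.2.lo s' = 0 ∧ t.2.2.hi s' = 0) }

/-- Symbolic runs in the parametric probabilistic zone graph along a list of
(edge, reset set, target location) choices. -/
def PIPTA.SymbSteps {A L X P : Type*} [DecidableEq X] (M : PIPTA A L X P) :
    L → PZone X P → List (EdgeT A L X P × Finset X × L) → L → PZone X P → Prop
  | l, C, [], lf, Cf => lf = l ∧ Cf = C
  | l, C, (e, ρ, l') :: rest, lf, Cf =>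
      e ∈ M.edges ∧ e.1 = l ∧ 0 < e.2.2.2.hi (ρ, l') ∧
      PIPTA.SymbSteps M l' (pZoneSucc C e.2.1 ρ) rest lf Cf

/-- A parameter valuation satisfies the projection of a parametric zone onto the
parameters. -/
def vSatZone {X P : Type*} (v : P → NNRat) (C : PZone X P) : Prop :=
  ∃ w : X → ℝ, (w, fun p => ((v p : ℚ) : ℝ)) ∈ C


/-- The interval distribution over (reset set, zone-graph state) pairs reconstructed
from a zone-graph transition: `Υ'(ρ', s') = I(s')` when `s'` is the successor of the
current zone by resetting `ρ'` (and the corresponding branch has positive possible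
probability), and `[0,0]` otherwise. -/
def reconDist {L X : Type*} [DecidableEq X] (C : Set (X → ℝ)) (g : Zone X)
    (Υ : IntervalDist (Finset X × L)) (I : IntervalDist (L × Set (X → ℝ))) :
    IntervalDist (Finset X × (L × Set (X → ℝ))) where
  lo := fun t => if 0 < Υ.hi (t.1, t.2.1) ∧ t.2.2 = zoneSucc C g t.1 then I.lo t.2 else 0
  hi := fun t => if 0 < Υ.hi (t.1, t.2.1) ∧ t.2.2 = zoneSucc C g t.1 then I.hi t.2 else 0
  lo_nonneg := by
    intro t; (try dsimp only); split
    · exact I.lo_nonneg t.2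
    · exact le_rfl
  lo_le_hi := by
    intro t; (try dsimp only); split
    · exact I.lo_le_hi t.2
    · exact le_rfl
  hi_le_one := by
    intro t; (try dsimp only); split
    · exact I.hi_le_one t.2
    · exact zero_le_one

/-- `Reconstruct`: the IPTA reconstructed from the probabilistic zone graph of an IPTA.
Its locations are the states of the zone graph, its initial location is the initial
state, and each zone-graph transition yields an edge with the same guard and action. -/
def IPTA.Reconstruct {A L X : Type*} [DecidableEq X] (IP : IPTA A L X (Zone X)) :
    IPTA A (L × Set (X → ℝ)) X (Zone X) where
  init := IP.zoneGraph.init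
  edges := { e' | ∃ (s : L × Set (X → ℝ)) (g : Zone X) (a : A)
      (Υ : IntervalDist (Finset X × L)) (I : IntervalDist (L × Set (X → ℝ))),
      (s, (s.1, g, a, Υ), I) ∈ IP.zoneGraph.trans ∧
      e' = (s, g, a, reconDist s.2 g Υ I) }

/-- Equivalence of two IMDPs up to renaming (of states/locations and actions): a
bijection between the reachable parts preserving the initial state and the transitions
together with their interval probabilities. -/
def IMDP.EquivUpToRenaming {S1 A1 S2 A2 : Type*} (M1 : IMDP S1 A1) (M2 : IMDP S2 A2) :
    Prop :=
  ∃ (φ : S1 → S2) (ψ : A1 → A2),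
    Set.BijOn φ { s | M1.Reach s } { s | M2.Reach s } ∧
    φ M1.init = M2.init ∧
    (∀ s, M1.Reach s → ∀ a I, (s, a, I) ∈ M1.trans →
      ∃ I', (φ s, ψ a, I') ∈ M2.trans ∧
        ∀ s', M1.Reach s' → I'.lo (φ s') = I.lo s' ∧ I'.hi (φ s') = I.hi s') ∧
    (∀ s, M1.Reach s → ∀ a' I', (φ s, a', I') ∈ M2.trans →
      ∃ a I, ψ a = a' ∧ (s, a, I) ∈ M1.trans ∧
        ∀ s', M1.Reach s' → I'.lo (φ s') = I.lo s' ∧ I'.hi (φ s') = I.hi s')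


/-! ### Auxiliary material for Statement 8 -/

section ReconAux

variable {A L X : Type*} [DecidableEq X]

lemma IntervalDist.ext' {S : Type*} {Y1 Y2 : IntervalDist S}
    (h1 : Y1.lo = Y2.lo) (h2 : Y1.hi = Y2.hi) : Y1 = Y2 := by
  cases Y1; cases Y2
  simp only at h1 h2
  subst h1; subst h2; rfl

/-- The trivial interval distribution `[0,0]` everywhere. -/
def zeroID (S : Type*) : IntervalDist S :=
  ⟨fun _ => 0, fun _ => 0, fun _ => le_rfl, fun _ => le_rfl, fun _ => zero_le_one⟩

/-- Lift of an interval distribution over zone-graph states to one over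
states of the zone graph of the reconstructed IPTA. -/
def liftDist {L X : Type*} (I : IntervalDist (L × Set (X → ℝ))) :
    IntervalDist ((L × Set (X → ℝ)) × Set (X → ℝ)) where
  lo := fun t => if t.2 = t.1.2 then I.lo t.1 else 0
  hi := fun t => if t.2 = t.1.2 then I.hi t.1 else 0
  lo_nonneg := by intro t; (try dsimp only); split; exacts [I.lo_nonneg _, le_rfl]
  lo_le_hi := by intro t; (try dsimp only); split; exacts [I.lo_le_hi _, le_rfl]
  hi_le_one := by intro t; (try dsimp only); split; exacts [I.hi_le_one _, zero_le_one]

lemma zg_elim {IP : IPTA A L X (Zone X)}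
    {s : L × Set (X → ℝ)} {e : L × Zone X × A × IntervalDist (Finset X × L)}
    {I : IntervalDist (L × Set (X → ℝ))}
    (ht : (s, e, I) ∈ IP.zoneGraph.trans) :
    ∃ g a Υ, e = (s.1, g, a, Υ) ∧ (s.1, g, a, Υ) ∈ IP.edges ∧
      (∀ (ρ : Finset X) (l' : L), 0 < Υ.hi (ρ, l') →
        I.lo (l', zoneSucc s.2 g ρ) = Υ.lo (ρ, l') ∧
        I.hi (l', zoneSucc s.2 g ρ) = Υ.hi (ρ, l')) ∧
      (∀ s'', (∀ (ρ : Finset X) (l' : L), 0 < Υ.hi (ρ, l') →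
          s'' ≠ (l', zoneSucc s.2 g ρ)) →
        I.lo s'' = 0 ∧ I.hi s'' = 0) := by
  obtain ⟨l, C, g, a, Υ, he, h1, h2, h3, h4⟩ := ht
  simp only at h1 h2 h3 h4
  subst h1
  exact ⟨g, a, Υ, h2, he, h3, h4⟩

lemma zg_intro {IP : IPTA A L X (Zone X)}
    (s : L × Set (X → ℝ)) (g : Zone X) (a : A) (Υ : IntervalDist (Finset X × L))
    (I : IntervalDist (L × Set (X → ℝ)))
    (he : (s.1, g, a, Υ) ∈ IP.edges)
    (h3 : ∀ (ρ : Finset X) (l' : L), 0 < Υ.hi (ρ, l') →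
        I.lo (l', zoneSucc s.2 g ρ) = Υ.lo (ρ, l') ∧
        I.hi (l', zoneSucc s.2 g ρ) = Υ.hi (ρ, l'))
    (h4 : ∀ s'', (∀ (ρ : Finset X) (l' : L), 0 < Υ.hi (ρ, l') →
          s'' ≠ (l', zoneSucc s.2 g ρ)) →
        I.lo s'' = 0 ∧ I.hi s'' = 0) :
    (s, (s.1, g, a, Υ), I) ∈ IP.zoneGraph.trans :=
  ⟨s.1, s.2, g, a, Υ, he, rfl, rfl, h3, h4⟩

lemma zg_elim' {IP : IPTA A L X (Zone X)}
    {s : L × Set (X → ℝ)} {g : Zone X} {a : A} {Υ : IntervalDist (Finset X × L)}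
    {I : IntervalDist (L × Set (X → ℝ))}
    (ht : (s, (s.1, g, a, Υ), I) ∈ IP.zoneGraph.trans) :
    (s.1, g, a, Υ) ∈ IP.edges ∧
      (∀ (ρ : Finset X) (l' : L), 0 < Υ.hi (ρ, l') →
        I.lo (l', zoneSucc s.2 g ρ) = Υ.lo (ρ, l') ∧
        I.hi (l', zoneSucc s.2 g ρ) = Υ.hi (ρ, l')) ∧
      (∀ s'', (∀ (ρ : Finset X) (l' : L), 0 < Υ.hi (ρ, l') →
          s'' ≠ (l', zoneSucc s.2 g ρ)) →
        I.lo s'' = 0 ∧ I.hi s'' = 0) := by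
  obtain ⟨g', a', Υ', heq, he, h3, h4⟩ := zg_elim ht
  simp only [Prod.mk.injEq] at heq
  obtain ⟨-, hg, ha, hΥ⟩ := heq
  subst hg; subst ha; subst hΥ
  exact ⟨he, h3, h4⟩

lemma reconDist_hi_pos {C : Set (X → ℝ)} {g : Zone X} {Υ : IntervalDist (Finset X × L)}
    {I : IntervalDist (L × Set (X → ℝ))} {ρ : Finset X} {m : L × Set (X → ℝ)}
    (h : 0 < (reconDist C g Υ I).hi (ρ, m)) :
    0 < Υ.hi (ρ, m.1) ∧ m.2 = zoneSucc C g ρ := by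
  by_cases hc : 0 < Υ.hi (ρ, m.1) ∧ m.2 = zoneSucc C g ρ
  · exact hc
  · exfalso
    have : (reconDist C g Υ I).hi (ρ, m) = 0 := if_neg hc
    rw [this] at h
    exact lt_irrefl 0 h

lemma reconDist_apply_pos {C : Set (X → ℝ)} {g : Zone X} {Υ : IntervalDist (Finset X × L)}
    {I : IntervalDist (L × Set (X → ℝ))} {ρ : Finset X} {m : L × Set (X → ℝ)}
    (hc : 0 < Υ.hi (ρ, m.1) ∧ m.2 = zoneSucc C g ρ) :
    (reconDist C g Υ I).lo (ρ, m) = I.lo m ∧ (reconDist C g Υ I).hi (ρ, m) = I.hi m :=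
  ⟨if_pos hc, if_pos hc⟩

lemma recon_extract {IP : IPTA A L X (Zone X)}
    {s : L × Set (X → ℝ)} {g : Zone X} {a : A} {Υ : IntervalDist (Finset X × L)}
    {I : IntervalDist (L × Set (X → ℝ))}
    (ht : (s, (s.1, g, a, Υ), I) ∈ IP.zoneGraph.trans) (ρ : Finset X) (l' : L) :
    (reconDist s.2 g Υ I).lo (ρ, (l', zoneSucc s.2 g ρ)) = Υ.lo (ρ, l') ∧
    (reconDist s.2 g Υ I).hi (ρ, (l', zoneSucc s.2 g ρ)) = Υ.hi (ρ, l') := by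
  obtain ⟨-, h3, -⟩ := zg_elim' ht
  by_cases hp : 0 < Υ.hi (ρ, l')
  · have hc : 0 < Υ.hi (ρ, ((l', zoneSucc s.2 g ρ) : L × Set (X → ℝ)).1) ∧
        ((l', zoneSucc s.2 g ρ) : L × Set (X → ℝ)).2 = zoneSucc s.2 g ρ := ⟨hp, rfl⟩
    obtain ⟨e1, e2⟩ := reconDist_apply_pos (C := s.2) (I := I) hc
    rw [e1, e2, (h3 ρ l' hp).1, (h3 ρ l' hp).2]
    exact ⟨rfl, rfl⟩
  · have hhi : Υ.hi (ρ, l') = 0 :=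
      le_antisymm (not_lt.mp hp) (le_trans (Υ.lo_nonneg _) (Υ.lo_le_hi _))
    have hlo : Υ.lo (ρ, l') = 0 :=
      le_antisymm (hhi ▸ Υ.lo_le_hi _) (Υ.lo_nonneg _)
    have hc : ¬(0 < Υ.hi (ρ, ((l', zoneSucc s.2 g ρ) : L × Set (X → ℝ)).1) ∧
        ((l', zoneSucc s.2 g ρ) : L × Set (X → ℝ)).2 = zoneSucc s.2 g ρ) := by
      intro hcc; exact hp hcc.1
    constructor
    · rw [hlo]; exact if_neg hc
    · rw [hhi]; exact if_neg hc

lemma recon_unique {IP : IPTA A L X (Zone X)}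
    {s : L × Set (X → ℝ)} {g : Zone X} {a a₂ : A}
    {Υ₁ Υ₂ : IntervalDist (Finset X × L)} {I₁ I₂ : IntervalDist (L × Set (X → ℝ))}
    (h1 : (s, (s.1, g, a, Υ₁), I₁) ∈ IP.zoneGraph.trans)
    (h2 : (s, (s.1, g, a₂, Υ₂), I₂) ∈ IP.zoneGraph.trans)
    (he : reconDist s.2 g Υ₁ I₁ = reconDist s.2 g Υ₂ I₂) : Υ₁ = Υ₂ := by
  apply IntervalDist.ext' <;> funext p <;> obtain ⟨ρ, l'⟩ := p
  · rw [← (recon_extract h1 ρ l').1, ← (recon_extract h2 ρ l').1, he]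
  · rw [← (recon_extract h1 ρ l').2, ← (recon_extract h2 ρ l').2, he]

lemma lift_trans {IP : IPTA A L X (Zone X)}
    {s : L × Set (X → ℝ)} {g : Zone X} {a : A} {Υ : IntervalDist (Finset X × L)}
    {I : IntervalDist (L × Set (X → ℝ))}
    (ht : (s, (s.1, g, a, Υ), I) ∈ IP.zoneGraph.trans) :
    (((s, s.2) : (L × Set (X → ℝ)) × Set (X → ℝ)),
      ((s, g, a, reconDist s.2 g Υ I) :
        (L × Set (X → ℝ)) × Zone X × A × IntervalDist (Finset X × (L × Set (X → ℝ)))),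
      liftDist I) ∈ (IP.Reconstruct).zoneGraph.trans := by
  obtain ⟨he, h3, h4⟩ := zg_elim' ht
  refine zg_intro ((s, s.2) : (L × Set (X → ℝ)) × Set (X → ℝ)) g a
    (reconDist s.2 g Υ I) (liftDist I) ?_ ?_ ?_
  · exact ⟨s, g, a, Υ, I, ht, rfl⟩
  · intro ρ m hpos
    obtain ⟨hp, hm2⟩ := reconDist_hi_pos hpos
    obtain ⟨e1, e2⟩ := reconDist_apply_pos (C := s.2) (I := I) (ρ := ρ) (m := m) ⟨hp, hm2⟩
    rw [e1, e2]
    constructor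
    · show (if zoneSucc s.2 g ρ = m.2 then I.lo m else 0) = I.lo m
      rw [if_pos hm2.symm]
    · show (if zoneSucc s.2 g ρ = m.2 then I.hi m else 0) = I.hi m
      rw [if_pos hm2.symm]
  · intro s'' hne
    by_cases hE : s''.2 = s''.1.2
    · have hz : ∀ (ρ : Finset X) (l' : L), 0 < Υ.hi (ρ, l') →
          s''.1 ≠ (l', zoneSucc s.2 g ρ) := by
        intro ρ l' hp hm
        have hc : 0 < Υ.hi (ρ, (s''.1).1) ∧ (s''.1).2 = zoneSucc s.2 g ρ := by
          constructor
          · rw [hm]; exact hp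
          · rw [hm]
        have hIpos : 0 < (reconDist s.2 g Υ I).hi (ρ, s''.1) := by
          rw [(reconDist_apply_pos (I := I) hc).2, hm, (h3 ρ l' hp).2]
          exact hp
        apply hne ρ s''.1 hIpos
        have : s''.2 = zoneSucc s.2 g ρ := by rw [hE, hm]
        calc s'' = (s''.1, s''.2) := rfl
          _ = (s''.1, zoneSucc s.2 g ρ) := by rw [this]
      obtain ⟨z1, z2⟩ := h4 s''.1 hz
      constructor
      · show (if s''.2 = s''.1.2 then I.lo s''.1 else 0) = 0
        rw [if_pos hE, z1]
      · show (if s''.2 = s''.1.2 then I.hi s''.1 else 0) = 0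
        rw [if_pos hE, z2]
    · exact ⟨if_neg hE, if_neg hE⟩

lemma reach_inv (IP : IPTA A L X (Zone X)) :
    ∀ sh, ((IP.Reconstruct).zoneGraph).Reach sh → sh.2 = sh.1.2 ∧ IP.zoneGraph.Reach sh.1 := by
  intro sh h
  induction h with
  | init => exact ⟨rfl, IMDP.Reach.init⟩
  | @step t e I s' hr ht hpos ih =>
    obtain ⟨g, a₀, Υ', heq, he, h3, h4⟩ := zg_elim ht
    obtain ⟨u, g₂, a₂, Υ, I₂, htr, heqE⟩ := he
    simp only [Prod.mk.injEq] at heqE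
    obtain ⟨hu, hg2, ha2, hY⟩ := heqE
    subst hg2; subst ha2; subst hY
    have htr' : (t.1, (t.1.1, g, a₀, Υ), I₂) ∈ IP.zoneGraph.trans := by
      rw [hu]; exact htr
    have hex : ∃ (ρ : Finset X) (m'' : L × Set (X → ℝ)),
        0 < (reconDist u.2 g Υ I₂).hi (ρ, m'') ∧ s' = (m'', zoneSucc t.2 g ρ) := by
      by_contra hcon
      push_neg at hcon
      have := h4 s' (fun ρ m'' hp => hcon ρ m'' hp)
      rw [this.2] at hpos
      exact lt_irrefl 0 hpos
    obtain ⟨ρ, m'', hp, hs'⟩ := hex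
    obtain ⟨hΥp, hm2⟩ := reconDist_hi_pos hp
    have hu2 : u.2 = t.1.2 := by rw [hu]
    have hzeq : zoneSucc t.2 g ρ = zoneSucc t.1.2 g ρ := by rw [ih.1]
    constructor
    · rw [hs']
      show zoneSucc t.2 g ρ = m''.2
      rw [hzeq, hm2, hu2]
    · rw [hs']
      show IP.zoneGraph.Reach m''
      obtain ⟨-, hp3, -⟩ := zg_elim' htr'
      have hIp : 0 < I₂.hi m'' := by
        have h5 := (hp3 ρ m''.1 hΥp).2
        have hmeq : m'' = (m''.1, zoneSucc t.1.2 g ρ) := by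
          calc m'' = (m''.1, m''.2) := rfl
            _ = (m''.1, zoneSucc t.1.2 g ρ) := by rw [hm2, hu2]
        rw [hmeq, h5]
        exact hΥp
      exact IMDP.Reach.step ih.2 htr' hIp

lemma reach_lift (IP : IPTA A L X (Zone X)) :
    ∀ m, IP.zoneGraph.Reach m → ((IP.Reconstruct).zoneGraph).Reach (m, m.2) := by
  intro m h
  induction h with
  | init => exact IMDP.Reach.init
  | @step t e I s' hr ht hpos ih =>
    obtain ⟨g, a₀, Υ, heq, he, h3, h4⟩ := zg_elim ht
    subst heq
    have hlt := lift_trans ht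
    have hpos' : 0 < (liftDist I).hi ((s', s'.2)) := by
      show 0 < (if s'.2 = s'.2 then I.hi s' else 0)
      rw [if_pos rfl]; exact hpos
    exact IMDP.Reach.step ih hlt hpos'

/-- The property that an edge of the reconstructed IPTA arises from a zone-graph
transition, packaged for `Classical.choice`. -/
def recP (IP : IPTA A L X (Zone X))
    (e' : (L × Set (X → ℝ)) × Zone X × A × IntervalDist (Finset X × (L × Set (X → ℝ)))) :
    Prop :=
  ∃ p : IntervalDist (Finset X × L) × IntervalDist (L × Set (X → ℝ)),
    (e'.1, (e'.1.1, e'.2.1, e'.2.2.1, p.1), p.2) ∈ IP.zoneGraph.trans ∧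
    e'.2.2.2 = reconDist e'.1.2 e'.2.1 p.1 p.2

/-- The action-renaming map. -/
noncomputable def ψmap (IP : IPTA A L X (Zone X))
    (e' : (L × Set (X → ℝ)) × Zone X × A × IntervalDist (Finset X × (L × Set (X → ℝ)))) :
    L × Zone X × A × IntervalDist (Finset X × L) :=
  (e'.1.1, e'.2.1, e'.2.2.1, if h : recP IP e' then h.choose.1 else zeroID _)

end ReconAux

/-- The probabilistic zone graph of the IPTA reconstructed from the
probabilistic zone graph of an IPTA is equivalent, up to renaming of locations, to the
original probabilistic zone graph. -/
theorem reconstruct_zoneGraph_equiv {A L X : Type*} [DecidableEq X]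
    (IP : IPTA A L X (Zone X)) :
    IMDP.EquivUpToRenaming ((IP.Reconstruct).zoneGraph) (IP.zoneGraph) := by
  refine ⟨Prod.fst, ψmap IP, ⟨?_, ?_, ?_⟩, rfl, ?_, ?_⟩
  · -- maps to
    intro sh h
    exact (reach_inv IP sh h).2
  · -- injective on reachable states
    intro s1 h1 s2 h2 he
    have e1 := (reach_inv IP s1 h1).1
    have e2 := (reach_inv IP s2 h2).1
    have he' : s1.1 = s2.1 := he
    calc s1 = (s1.1, s1.2) := rfl
      _ = (s2.1, s2.2) := by rw [e1, e2, he']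
      _ = s2 := rfl
  · -- surjective onto reachable states
    intro m hm
    exact ⟨(m, m.2), reach_lift IP m hm, rfl⟩
  · -- forward transition correspondence
    intro sh hre e' Ih ht
    have hinv := (reach_inv IP sh hre).1
    obtain ⟨g, a₀, Υ', heq, he, h3, h4⟩ := zg_elim ht
    obtain ⟨u, g₂, a₂, Υ, I₂, htr, heqE⟩ := he
    simp only [Prod.mk.injEq] at heqE
    obtain ⟨hu, hg2, ha2, hY⟩ := heqE
    subst hg2; subst ha2; subst hY; subst hu; subst heq
    have hP : recP IP (sh.1, g, a₀, reconDist sh.1.2 g Υ I₂) := ⟨(Υ, I₂), htr, rfl⟩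
    have htc := hP.choose_spec.1
    have heqc := hP.choose_spec.2
    dsimp only at htc heqc
    refine ⟨hP.choose.2, ?_, ?_⟩
    · have hψ : ψmap IP ((sh.1, g, a₀, reconDist sh.1.2 g Υ I₂)) =
          (sh.1.1, g, a₀, hP.choose.1) := by
        unfold ψmap
        rw [dif_pos hP]
      rw [hψ]
      exact htc
    · intro s' hre'
      have hinv' := (reach_inv IP s' hre').1
      have hs' : s' = (s'.1, s'.1.2) := by
        calc s' = (s'.1, s'.2) := rfl
          _ = (s'.1, s'.1.2) := by rw [hinv']
      obtain ⟨-, hp3, hz3⟩ := zg_elim' htc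
      by_cases hQ : ∃ (ρ : Finset X) (l' : L), 0 < hP.choose.1.hi (ρ, l') ∧
          s'.1 = (l', zoneSucc sh.1.2 g ρ)
      · obtain ⟨ρ, l', hp, hmeq⟩ := hQ
        have hcond : 0 < hP.choose.1.hi (ρ, s'.1.1) ∧ s'.1.2 = zoneSucc sh.1.2 g ρ := by
          constructor
          · rw [hmeq]; exact hp
          · rw [hmeq]
        have happ := reconDist_apply_pos (C := sh.1.2) (g := g) (Υ := hP.choose.1)
          (I := hP.choose.2) (ρ := ρ) (m := s'.1) hcond
        have hpin := hp3 ρ l' hp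
        have hΥ'pos : 0 < (reconDist sh.1.2 g Υ I₂).hi (ρ, s'.1) := by
          rw [heqc, happ.2, hmeq, hpin.2]
          exact hp
        have hIm := h3 ρ s'.1 hΥ'pos
        have hms : s' = (s'.1, zoneSucc sh.2 g ρ) := by
          have h2' : s'.2 = zoneSucc sh.2 g ρ := by rw [hinv', hcond.2, hinv]
          exact Prod.ext_iff.mpr ⟨rfl, h2'⟩
        constructor
        · have e1 := congrArg Ih.lo hms
          rw [e1, hIm.1, ← happ.1, ← heqc]
        · have e2 := congrArg Ih.hi hms
          rw [e2, hIm.2, ← happ.2, ← heqc]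
      · push_neg at hQ
        have hz := hz3 s'.1 (fun ρ l' hp => hQ ρ l' hp)
        have hz' : Ih.lo s' = 0 ∧ Ih.hi s' = 0 := by
          apply h4 s'
          intro ρ m'' hp hmeq
          rw [heqc] at hp
          obtain ⟨hc1, hc2⟩ := reconDist_hi_pos hp
          have hm1 : s'.1 = m'' := by rw [hmeq]
          apply hQ ρ m''.1 hc1
          rw [hm1]
          calc m'' = (m''.1, m''.2) := rfl
            _ = (m''.1, zoneSucc sh.1.2 g ρ) := by rw [hc2]
        exact ⟨by rw [hz.1, hz'.1], by rw [hz.2, hz'.2]⟩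
  · -- backward transition correspondence
    intro sh hre a' Ih ht
    have hinv := (reach_inv IP sh hre).1
    obtain ⟨g, a₀, Υ, heq, he, h3, h4⟩ := zg_elim ht
    subst heq
    have hP : recP IP (sh.1, g, a₀, reconDist sh.1.2 g Υ Ih) := ⟨(Υ, Ih), ht, rfl⟩
    have hun : hP.choose.1 = Υ :=
      recon_unique hP.choose_spec.1 ht hP.choose_spec.2.symm
    refine ⟨(sh.1, g, a₀, reconDist sh.1.2 g Υ Ih), liftDist Ih, ?_, ?_, ?_⟩
    · unfold ψmap
      rw [dif_pos hP, hun]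
    · have hlt := lift_trans ht
      have hsh : sh = (sh.1, sh.1.2) := by
        calc sh = (sh.1, sh.2) := rfl
          _ = (sh.1, sh.1.2) := by rw [hinv]
      rw [hsh]
      exact hlt
    · intro s' hre'
      have hinv' := (reach_inv IP s' hre').1
      constructor
      · show Ih.lo s'.1 = (if s'.2 = s'.1.2 then Ih.lo s'.1 else 0)
        rw [if_pos hinv']
      · show Ih.hi s'.1 = (if s'.2 = s'.1.2 then Ih.hi s'.1 else 0)
        rw [if_pos hinv']

end
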